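/- Given positive radii r_i, r_j, r_k and weights Φ_ij, Φ_jk, Φ_ik ∈ [0, π/2], the following explicit formula holds: r_j · ∂θ_i^{jk}/∂r_j = (r_j / l_ij) · (cos α − cos θ_j^{ik} · cos β) / sin θ_j^{ik}, where α = arccos((r_j² + l_jk² − r_k²)/(2 r_j l_jk)), β = arccos((r_j² + l_ij² − r_i²)/(2 r_j l_ij)), and θ_j^{ik} = arccos((l_ij² + l_jk² − l_ik²)/(2 l_ij l_jk)) is the inner angle at vertex j. -/

import Mathlib

open Real

/-- The edge length assigned to edge `{i,j}` by the circle packing metric with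
radii `a`, `b` and weight `φ`. -/
noncomputable def ell (a b φ : ℝ) : ℝ := Real.sqrt (a ^ 2 + b ^ 2 + 2 * a * b * Real.cos φ)

/-- The inner angle of a Euclidean triangle at the vertex whose two adjacent sides
have lengths `x`, `y` and whose opposite side has length `z`. -/
noncomputable def innerAngle (x y z : ℝ) : ℝ :=
  Real.arccos ((x ^ 2 + y ^ 2 - z ^ 2) / (2 * x * y))

private lemma lt_of_sq {x s : ℝ} (hx : 0 < x) (hs : 0 < s) (h : x ^ 2 < s ^ 2) : x < s := by
  nlinarith

private lemma le_of_sq {x s : ℝ} (hx : 0 ≤ x) (hs : 0 ≤ s) (h : s ^ 2 ≤ x ^ 2) : s ≤ x := by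
  nlinarith

private lemma sq_le_add {a b c : ℝ} (ha : 0 ≤ a) (hb : 0 ≤ b) (hc : c ≤ 1) :
    a ^ 2 + b ^ 2 + 2 * a * b * c ≤ (a + b) ^ 2 := by
  nlinarith [mul_nonneg (mul_nonneg ha hb) (sub_nonneg.mpr hc)]

private lemma quad_nonneg (a x c : ℝ) (hc : -1 ≤ c) (hc' : c ≤ 1) :
    0 ≤ a ^ 2 + x ^ 2 + 2 * a * x * c := by
  nlinarith [sq_nonneg (x + a * c),
    mul_nonneg (sq_nonneg a) (mul_nonneg (sub_nonneg.mpr hc') (by linarith : (0:ℝ) ≤ 1 + c))]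

private lemma abs_lt_of_sq_lt {t d : ℝ} (hd : 0 < d) (h : t ^ 2 < d ^ 2) : -d < t ∧ t < d := by
  constructor <;> nlinarith

private lemma cos_arg_bounds {a b c s : ℝ} (ha : 0 < a) (hb : 0 < b) (hc0 : 0 ≤ c)
    (hc1 : c ≤ 1) (hs : 0 < s) (hs2 : s ^ 2 = a ^ 2 + b ^ 2 + 2 * a * b * c) :
    -1 ≤ (a ^ 2 + s ^ 2 - b ^ 2) / (2 * a * s) ∧ (a ^ 2 + s ^ 2 - b ^ 2) / (2 * a * s) ≤ 1 := by
  have hd : 0 < 2 * a * s := by positivity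
  constructor
  · have hnum : 0 ≤ a ^ 2 + s ^ 2 - b ^ 2 := by
      rw [hs2]; nlinarith [mul_nonneg (mul_nonneg ha.le hb.le) hc0]
    linarith [div_nonneg hnum hd.le]
  · rw [div_le_one hd]
    have key : a + b * c ≤ s := by
      have h1 : (a + b * c) ^ 2 ≤ s ^ 2 := by
        rw [hs2]
        nlinarith [mul_nonneg (mul_nonneg (mul_nonneg hb.le hb.le) (sub_nonneg.mpr hc1))
          (by linarith : (0:ℝ) ≤ 1 + c)]
      nlinarith [h1, hs, ha, mul_nonneg hb.le hc0]
    nlinarith [mul_le_mul_of_nonneg_left key (by linarith : (0:ℝ) ≤ 2 * a), hs2]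

set_option maxHeartbeats 1000000 in
/-- The explicit formula
`r_j ∂θ_i^{jk}/∂r_j = (r_j / l_ij) (cos α − cos θ_j^{ik} cos β) / sin θ_j^{ik}`. -/
theorem angle_deriv_formula
    (ri rj rk Φij Φjk Φik : ℝ)
    (hri : 0 < ri) (hrj : 0 < rj) (hrk : 0 < rk)
    (hΦij : Φij ∈ Set.Icc 0 (π / 2)) (hΦjk : Φjk ∈ Set.Icc 0 (π / 2))
    (hΦik : Φik ∈ Set.Icc 0 (π / 2)) :
    rj * deriv (fun x => innerAngle (ell ri x Φij) (ell ri rk Φik) (ell x rk Φjk)) rj =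
      (rj / ell ri rj Φij) *
        ((Real.cos (Real.arccos ((rj ^ 2 + (ell rj rk Φjk) ^ 2 - rk ^ 2) /
              (2 * rj * ell rj rk Φjk))) -
          Real.cos (innerAngle (ell ri rj Φij) (ell rj rk Φjk) (ell ri rk Φik)) *
          Real.cos (Real.arccos ((rj ^ 2 + (ell ri rj Φij) ^ 2 - ri ^ 2) /
              (2 * rj * ell ri rj Φij)))) /
        Real.sin (innerAngle (ell ri rj Φij) (ell rj rk Φjk) (ell ri rk Φik))) := by
  obtain ⟨hij0, hij1⟩ := hΦij
  obtain ⟨hjk0, hjk1⟩ := hΦjk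
  obtain ⟨hik0, hik1⟩ := hΦik
  have hpi := Real.pi_pos
  have hc1 : 0 ≤ Real.cos Φij := Real.cos_nonneg_of_mem_Icc ⟨by linarith, hij1⟩
  have hc2 : 0 ≤ Real.cos Φjk := Real.cos_nonneg_of_mem_Icc ⟨by linarith, hjk1⟩
  have hc3 : 0 ≤ Real.cos Φik := Real.cos_nonneg_of_mem_Icc ⟨by linarith, hik1⟩
  have hc1' : Real.cos Φij ≤ 1 := Real.cos_le_one _
  have hc2' : Real.cos Φjk ≤ 1 := Real.cos_le_one _
  have hc3' : Real.cos Φik ≤ 1 := Real.cos_le_one _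
  obtain ⟨u, hu_def⟩ : ∃ u : ℝ, u = ri ^ 2 + rj ^ 2 + 2 * ri * rj * Real.cos Φij := ⟨_, rfl⟩
  obtain ⟨v, hv_def⟩ : ∃ v : ℝ, v = rj ^ 2 + rk ^ 2 + 2 * rj * rk * Real.cos Φjk := ⟨_, rfl⟩
  obtain ⟨w, hw_def⟩ : ∃ w : ℝ, w = ri ^ 2 + rk ^ 2 + 2 * ri * rk * Real.cos Φik := ⟨_, rfl⟩
  have hm1 : 0 ≤ 2 * ri * rj * Real.cos Φij := mul_nonneg (by positivity) hc1
  have hm2 : 0 ≤ 2 * rj * rk * Real.cos Φjk := mul_nonneg (by positivity) hc2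
  have hm3 : 0 ≤ 2 * ri * rk * Real.cos Φik := mul_nonneg (by positivity) hc3
  have hu : 0 < u := by rw [hu_def]; linarith [pow_pos hri 2, pow_pos hrj 2]
  have hv : 0 < v := by rw [hv_def]; linarith [pow_pos hrj 2, pow_pos hrk 2]
  have hw : 0 < w := by rw [hw_def]; linarith [pow_pos hri 2, pow_pos hrk 2]
  obtain ⟨su, hsu_def⟩ : ∃ s : ℝ, s = Real.sqrt u := ⟨_, rfl⟩
  obtain ⟨sv, hsv_def⟩ : ∃ s : ℝ, s = Real.sqrt v := ⟨_, rfl⟩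
  obtain ⟨sw, hsw_def⟩ : ∃ s : ℝ, s = Real.sqrt w := ⟨_, rfl⟩
  have hsu2 : su ^ 2 = u := by rw [hsu_def]; exact Real.sq_sqrt hu.le
  have hsv2 : sv ^ 2 = v := by rw [hsv_def]; exact Real.sq_sqrt hv.le
  have hsw2 : sw ^ 2 = w := by rw [hsw_def]; exact Real.sq_sqrt hw.le
  have hsu0 : 0 < su := by rw [hsu_def]; exact Real.sqrt_pos.mpr hu
  have hsv0 : 0 < sv := by rw [hsv_def]; exact Real.sqrt_pos.mpr hv
  have hsw0 : 0 < sw := by rw [hsw_def]; exact Real.sqrt_pos.mpr hw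
  have hsuri : ri < su := lt_of_sq hri hsu0 (by rw [hsu2, hu_def]; linarith [hm1, pow_pos hrj 2])
  have hsvrj : rj < sv := lt_of_sq hrj hsv0 (by rw [hsv2, hv_def]; linarith [hm2, pow_pos hrk 2])
  have hsvrk : rk < sv := lt_of_sq hrk hsv0 (by rw [hsv2, hv_def]; linarith [hm2, pow_pos hrj 2])
  have hswri : ri < sw := lt_of_sq hri hsw0 (by rw [hsw2, hw_def]; linarith [hm3, pow_pos hrk 2])
  have hswrk : rk < sw := lt_of_sq hrk hsw0 (by rw [hsw2, hw_def]; linarith [hm3, pow_pos hri 2])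
  have hsurj : rj < su := lt_of_sq hrj hsu0 (by rw [hsu2, hu_def]; linarith [hm1, pow_pos hri 2])
  have hsule : su ≤ ri + rj :=
    le_of_sq (by linarith) hsu0.le (by rw [hsu2, hu_def]; exact sq_le_add hri.le hrj.le hc1')
  have hsvle : sv ≤ rj + rk :=
    le_of_sq (by linarith) hsv0.le (by rw [hsv2, hv_def]; exact sq_le_add hrj.le hrk.le hc2')
  have hswle : sw ≤ ri + rk :=
    le_of_sq (by linarith) hsw0.le (by rw [hsw2, hw_def]; exact sq_le_add hri.le hrk.le hc3')
  obtain ⟨Q, hQ_def⟩ :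
      ∃ q : ℝ, q = 2 * u * v + 2 * u * w + 2 * v * w - u ^ 2 - v ^ 2 - w ^ 2 := ⟨_, rfl⟩
  have hQ : 0 < Q := by
    have h1 : 0 < (su + sv) ^ 2 - w := by
      rw [← hsw2]
      have h := mul_pos (show (0:ℝ) < su + sv - sw by linarith)
        (show (0:ℝ) < su + sv + sw by linarith)
      have hexp : (su + sv - sw) * (su + sv + sw) = (su + sv) ^ 2 - sw ^ 2 := by ring
      linarith [h, hexp]
    have h2 : 0 < w - (su - sv) ^ 2 := by
      rw [← hsw2]
      have h := mul_pos (show (0:ℝ) < sw - (su - sv) by linarith)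
        (show (0:ℝ) < sw + (su - sv) by linarith)
      have hexp : (sw - (su - sv)) * (sw + (su - sv)) = sw ^ 2 - (su - sv) ^ 2 := by ring
      linarith [h, hexp]
    have hQe : Q = ((su + sv) ^ 2 - w) * (w - (su - sv) ^ 2) := by
      rw [hQ_def, ← hsu2, ← hsv2]; ring
    rw [hQe]; exact mul_pos h1 h2
  obtain ⟨sQ, hsQ_def⟩ : ∃ s : ℝ, s = Real.sqrt Q := ⟨_, rfl⟩
  have hsQ2 : sQ ^ 2 = Q := by rw [hsQ_def]; exact Real.sq_sqrt hQ.le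
  have hsQ0 : 0 < sQ := by rw [hsQ_def]; exact Real.sqrt_pos.mpr hQ
  have hQuw : Q = 4 * (u * w) - (u + w - v) ^ 2 := by rw [hQ_def]; ring
  have hQuv : Q = 4 * (u * v) - (u + v - w) ^ 2 := by rw [hQ_def]; ring
  -- nonnegativity of quadratics
  have hgx : ∀ x : ℝ, 0 ≤ ri ^ 2 + x ^ 2 + 2 * ri * x * Real.cos Φij := fun x =>
    quad_nonneg ri x _ (by linarith) hc1'
  have hhx : ∀ x : ℝ, 0 ≤ x ^ 2 + rk ^ 2 + 2 * x * rk * Real.cos Φjk := fun x => by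
    have h := quad_nonneg rk x _ (by linarith : (-1:ℝ) ≤ Real.cos Φjk) hc2'
    linarith [h]
  have hurj : ri ^ 2 + rj ^ 2 + 2 * ri * rj * Real.cos Φij = u := hu_def.symm
  have hvrj : rj ^ 2 + rk ^ 2 + 2 * rj * rk * Real.cos Φjk = v := hv_def.symm
  -- rewrite the function being differentiated
  have hfun : (fun x => innerAngle (ell ri x Φij) (ell ri rk Φik) (ell x rk Φjk))
      = fun x => Real.arccos ((ri ^ 2 + x ^ 2 + 2 * ri * x * Real.cos Φij + w -
          (x ^ 2 + rk ^ 2 + 2 * x * rk * Real.cos Φjk)) /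
          (2 * Real.sqrt (ri ^ 2 + x ^ 2 + 2 * ri * x * Real.cos Φij) * sw)) := by
    funext x
    simp only [innerAngle, ell]
    rw [Real.sq_sqrt (hgx x), Real.sq_sqrt (hhx x),
      Real.sq_sqrt (by rw [← hw_def]; exact hw.le), ← hw_def, ← hsw_def]
  -- derivatives
  have hgd : HasDerivAt (fun x : ℝ => ri ^ 2 + x ^ 2 + 2 * ri * x * Real.cos Φij)
      (2 * rj + 2 * ri * Real.cos Φij) rj := by
    have h1 : HasDerivAt (fun x : ℝ => x ^ 2) (2 * rj) rj := by
      simpa using hasDerivAt_pow 2 rj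
    have h2 : HasDerivAt (fun x : ℝ => 2 * ri * x * Real.cos Φij) (2 * ri * Real.cos Φij) rj := by
      simpa using ((hasDerivAt_id rj).const_mul (2 * ri)).mul_const (Real.cos Φij)
    exact (h1.const_add (ri ^ 2)).add h2
  have hhd : HasDerivAt (fun x : ℝ => x ^ 2 + rk ^ 2 + 2 * x * rk * Real.cos Φjk)
      (2 * rj + 2 * rk * Real.cos Φjk) rj := by
    have h1 : HasDerivAt (fun x : ℝ => x ^ 2) (2 * rj) rj := by
      simpa using hasDerivAt_pow 2 rj
    have h2 : HasDerivAt (fun x : ℝ => 2 * x * rk * Real.cos Φjk) (2 * rk * Real.cos Φjk) rj := by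
      have := (((hasDerivAt_id rj).const_mul (2:ℝ)).mul_const rk).mul_const (Real.cos Φjk)
      simpa [mul_assoc, mul_comm, mul_left_comm] using this
    exact (h1.add_const (rk ^ 2)).add h2
  have hsgd : HasDerivAt (fun x : ℝ => Real.sqrt (ri ^ 2 + x ^ 2 + 2 * ri * x * Real.cos Φij))
      ((2 * rj + 2 * ri * Real.cos Φij) / (2 * su)) rj := by
    have h := hgd.sqrt (show ri ^ 2 + rj ^ 2 + 2 * ri * rj * Real.cos Φij ≠ 0 by
      rw [hurj]; exact hu.ne')
    rw [show Real.sqrt (ri ^ 2 + rj ^ 2 + 2 * ri * rj * Real.cos Φij) = su by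
      rw [hurj, ← hsu_def]] at h
    exact h
  have hnumd : HasDerivAt (fun x : ℝ => ri ^ 2 + x ^ 2 + 2 * ri * x * Real.cos Φij + w -
      (x ^ 2 + rk ^ 2 + 2 * x * rk * Real.cos Φjk))
      (2 * rj + 2 * ri * Real.cos Φij - (2 * rj + 2 * rk * Real.cos Φjk)) rj :=
    (hgd.add_const w).sub hhd
  have hdend : HasDerivAt (fun x : ℝ =>
      2 * Real.sqrt (ri ^ 2 + x ^ 2 + 2 * ri * x * Real.cos Φij) * sw)
      (2 * ((2 * rj + 2 * ri * Real.cos Φij) / (2 * su)) * sw) rj :=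
    (hsgd.const_mul 2).mul_const sw
  have hden_ne : 2 * Real.sqrt (ri ^ 2 + rj ^ 2 + 2 * ri * rj * Real.cos Φij) * sw ≠ 0 := by
    rw [hurj, ← hsu_def]; positivity
  have hquot := hnumd.div hdend hden_ne
  -- the value of the inner function at rj
  have hval : (ri ^ 2 + rj ^ 2 + 2 * ri * rj * Real.cos Φij + w -
      (rj ^ 2 + rk ^ 2 + 2 * rj * rk * Real.cos Φjk)) /
      (2 * Real.sqrt (ri ^ 2 + rj ^ 2 + 2 * ri * rj * Real.cos Φij) * sw)
      = (u + w - v) / (2 * su * sw) := by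
    rw [hurj, hvrj, ← hsu_def]
  -- bounds on the arccos argument
  have hd2uw : (2 * su * sw) ^ 2 = 4 * (u * w) := by rw [← hsu2, ← hsw2]; ring
  have hlt_uw : (u + w - v) ^ 2 < (2 * su * sw) ^ 2 := by rw [hd2uw]; linarith [hQuw, hQ]
  obtain ⟨hbuw1, hbuw2⟩ := abs_lt_of_sq_lt (show (0:ℝ) < 2 * su * sw by positivity) hlt_uw
  have hne1' : (u + w - v) / (2 * su * sw) ≠ -1 := by
    have : -1 < (u + w - v) / (2 * su * sw) := by
      rw [lt_div_iff₀ (by positivity)]; linarith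
    linarith
  have hne2' : (u + w - v) / (2 * su * sw) ≠ 1 := by
    have : (u + w - v) / (2 * su * sw) < 1 := by
      rw [div_lt_one (by positivity)]; linarith
    linarith
  have hne1'' : (ri ^ 2 + rj ^ 2 + 2 * ri * rj * Real.cos Φij + w -
      (rj ^ 2 + rk ^ 2 + 2 * rj * rk * Real.cos Φjk)) /
      (2 * Real.sqrt (ri ^ 2 + rj ^ 2 + 2 * ri * rj * Real.cos Φij) * sw) ≠ -1 := by
    rw [hval]; exact hne1'
  have hne2'' : (ri ^ 2 + rj ^ 2 + 2 * ri * rj * Real.cos Φij + w -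
      (rj ^ 2 + rk ^ 2 + 2 * rj * rk * Real.cos Φjk)) /
      (2 * Real.sqrt (ri ^ 2 + rj ^ 2 + 2 * ri * rj * Real.cos Φij) * sw) ≠ 1 := by
    rw [hval]; exact hne2'
  have hcomp := (Real.hasDerivAt_arccos hne1'' hne2'').comp rj hquot
  have hder := hcomp.deriv
  rw [Function.comp_def] at hder
  simp only [Pi.div_apply] at hder
  -- auxiliary simplifications
  have key1 : Real.sqrt (1 - ((u + w - v) / (2 * su * sw)) ^ 2) = sQ / (2 * su * sw) := by
    have h5 : 1 - ((u + w - v) / (2 * su * sw)) ^ 2 = Q / (2 * su * sw) ^ 2 := by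
      rw [div_pow, hd2uw, eq_div_iff (by positivity : (4:ℝ) * (u * w) ≠ 0),
        sub_mul, div_mul_cancel₀ _ (by positivity : (4:ℝ) * (u * w) ≠ 0), one_mul]
      linarith [hQuw]
    rw [h5, Real.sqrt_div' Q (by positivity), Real.sqrt_sq (by positivity), ← hsQ_def]
  have hd2uv : (2 * su * sv) ^ 2 = 4 * (u * v) := by rw [← hsu2, ← hsv2]; ring
  have key2 : Real.sqrt (1 - ((u + v - w) / (2 * su * sv)) ^ 2) = sQ / (2 * su * sv) := by
    have h5 : 1 - ((u + v - w) / (2 * su * sv)) ^ 2 = Q / (2 * su * sv) ^ 2 := by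
      rw [div_pow, hd2uv, eq_div_iff (by positivity : (4:ℝ) * (u * v) ≠ 0),
        sub_mul, div_mul_cancel₀ _ (by positivity : (4:ℝ) * (u * v) ≠ 0), one_mul]
      linarith [hQuv]
    rw [h5, Real.sqrt_div' Q (by positivity), Real.sqrt_sq (by positivity), ← hsQ_def]
  have hlt_uv : (u + v - w) ^ 2 < (2 * su * sv) ^ 2 := by rw [hd2uv]; linarith [hQuv, hQ]
  obtain ⟨hbuv1, hbuv2⟩ := abs_lt_of_sq_lt (show (0:ℝ) < 2 * su * sv by positivity) hlt_uv
  have bθ1 : -1 ≤ (u + v - w) / (2 * su * sv) := by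
    rw [le_div_iff₀ (by positivity)]; linarith
  have bθ2 : (u + v - w) / (2 * su * sv) ≤ 1 := by
    rw [div_le_one (by positivity)]; linarith
  have bα := cos_arg_bounds hrj hrk hc2 hc2' hsv0 (by rw [hsv2, hv_def])
  rw [hsv2] at bα
  have bβ := cos_arg_bounds hrj hri hc1 hc1' hsu0 (by rw [hsu2, hu_def]; ring)
  rw [hsu2] at bβ
  have e1 : rj ^ 2 + v - rk ^ 2 = rj * (2 * rj + 2 * rk * Real.cos Φjk) := by
    rw [hv_def]; ring
  have e2 : rj ^ 2 + u - ri ^ 2 = rj * (2 * rj + 2 * ri * Real.cos Φij) := by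
    rw [hu_def]; ring
  have hwrj : ri ^ 2 + rk ^ 2 + 2 * ri * rk * Real.cos Φik = w := hw_def.symm
  -- assemble
  rw [hfun, hder, hval, hurj, hvrj, ← hsu_def, key1]
  simp only [innerAngle, ell]
  rw [Real.sq_sqrt (show (0:ℝ) ≤ ri ^ 2 + rj ^ 2 + 2 * ri * rj * Real.cos Φij by
      rw [hurj]; exact hu.le),
    Real.sq_sqrt (show (0:ℝ) ≤ rj ^ 2 + rk ^ 2 + 2 * rj * rk * Real.cos Φjk by
      rw [hvrj]; exact hv.le),
    Real.sq_sqrt (show (0:ℝ) ≤ ri ^ 2 + rk ^ 2 + 2 * ri * rk * Real.cos Φik by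
      rw [hwrj]; exact hw.le),
    hurj, hvrj, hwrj, ← hsu_def, ← hsv_def]
  rw [Real.cos_arccos bα.1 bα.2, Real.cos_arccos bθ1 bθ2, Real.cos_arccos bβ.1 bβ.2,
    Real.sin_arccos, key2, e1, e2, ← hsu2, ← hsv2, ← hsw2]
  have h2su : su ≠ 0 := hsu0.ne'
  have h2sv : sv ≠ 0 := hsv0.ne'
  have h2sw : sw ≠ 0 := hsw0.ne'
  have h2sQ : sQ ≠ 0 := hsQ0.ne'
  field_simp
  ring
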